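/- Let α > 0 and β > 1 be reals, and let P, P̂, P^max be reals with 0 < P < P̂ ≤ P^max. Then (P̂/α)^{1/β} − (P/α)^{1/β} > (1/(β α^{1/β})) · (P^max)^{(1/β) − 1} · (P̂ − P), where all powers are real powers (Real.rpow). -/

import Mathlib

/-- Key estimate in the proof of Proposition 2: a lower bound on the speed increase
produced by a propulsion-power increase, via the mean value theorem and the fact that
`x ↦ x^(1/β - 1)` is strictly decreasing on `(0, ∞)` when `β > 1`. -/
theorem stmt_3 (α β P Phat Pmax : ℝ) (hα : 0 < α) (hβ : 1 < β)
    (hP : 0 < P) (hPPhat : P < Phat) (hPmax : Phat ≤ Pmax) :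
    (Phat / α) ^ (1 / β) - (P / α) ^ (1 / β) >
      (1 / (β * α ^ (1 / β))) * Pmax ^ (1 / β - 1) * (Phat - P) := by
  have hβ0 : (0:ℝ) < β := lt_trans one_pos hβ
  set f : ℝ → ℝ := fun x => (x / α) ^ (1 / β) with hf
  set f' : ℝ → ℝ := fun x => (1 / β) * (x / α) ^ (1 / β - 1) * (1 / α) with hf'
  have hderiv : ∀ x ∈ Set.Ioo P Phat, HasDerivAt f (f' x) x := by
    intro x hx
    have hx0 : 0 < x := lt_trans hP hx.1
    have h1 : HasDerivAt (fun x : ℝ => x / α) (1 / α) x := by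
      simpa using (hasDerivAt_id x).div_const α
    have h2 : HasDerivAt (fun y : ℝ => y ^ (1 / β)) ((1 / β) * (x / α) ^ (1 / β - 1)) (x / α) :=
      Real.hasDerivAt_rpow_const (Or.inl (ne_of_gt (div_pos hx0 hα)))
        |>.congr_deriv (by ring)
    exact h2.comp x h1
  have hcont : ContinuousOn f (Set.Icc P Phat) := by
    apply ContinuousOn.rpow_const
    · exact (continuousOn_id.div_const α)
    · intro x hx
      exact Or.inl (ne_of_gt (div_pos (lt_of_lt_of_le hP hx.1) hα))
  obtain ⟨c, hc, hceq⟩ := exists_hasDerivAt_eq_slope f f' hPPhat hcont hderiv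
  have hc0 : 0 < c := lt_trans hP hc.1
  have hsub : 0 < Phat - P := sub_pos.2 hPPhat
  -- f' c = (1/(β α^{1/β})) * c^{1/β-1}
  have hfc : f' c = (1 / (β * α ^ (1 / β))) * c ^ (1 / β - 1) := by
    simp only [hf']
    rw [Real.div_rpow hc0.le hα.le]
    have hα1 : α ^ (1 / β) = α ^ (1 / β - 1) * α := by
      rw [← Real.rpow_add_one (ne_of_gt hα)]
      ring_nf
    have hne : α ^ (1 / β - 1) ≠ 0 := (Real.rpow_pos_of_pos hα _).ne'
    rw [hα1]
    field_simp
  have hlt : Pmax ^ (1 / β - 1) < c ^ (1 / β - 1) := by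
    apply Real.rpow_lt_rpow_of_neg hc0 (lt_of_lt_of_le hc.2 hPmax)
    have : 1 / β < 1 := by
      rw [div_lt_one hβ0]; exact hβ
    linarith
  have hpos : 0 < 1 / (β * α ^ (1 / β)) :=
    div_pos one_pos (mul_pos hβ0 (Real.rpow_pos_of_pos hα _))
  have : (1 / (β * α ^ (1 / β))) * Pmax ^ (1 / β - 1) < f' c := by
    rw [hfc]
    exact mul_lt_mul_of_pos_left hlt hpos
  have hslope : f Phat - f P = f' c * (Phat - P) := by
    field_simp at hceq
    linarith [hceq]
  calc (1 / (β * α ^ (1 / β))) * Pmax ^ (1 / β - 1) * (Phat - P)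
      < f' c * (Phat - P) := by exact mul_lt_mul_of_pos_right this hsub
    _ = f Phat - f P := hslope.symm
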